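/- The privacy-constrained guessing function h : [P_c(X), P_c(X|Y)] → ℝ is piecewise linear: there exist an integer K ≥ 1 and thresholds P_c(X) = ε_0 ≤ ε_1 ≤ … ≤ ε_K = P_c(X|Y) such that the restriction of h to each interval [ε_{i−1}, ε_i], i = 1, …, K, is an affine function of ε. -/

import Mathlib

open Finset

/-- The privacy `𝒫(F) = P_c(X|Z)` of a filter `F`, for a joint pmf `P` of `(X,Y)` on
`{1,…,M} × {1,…,N}` (modeled as `Fin (M+1) × Fin (N+1)`), with `Z` on an alphabet of
size `N+2`. -/
noncomputable def privF {M N : ℕ} (P : Fin (M + 1) → Fin (N + 1) → ℝ)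
    (F : Fin (N + 1) → Fin (N + 2) → ℝ) : ℝ :=
  ∑ z, ⨆ x, ∑ y, P x y * F y z

/-- The utility `𝒰(F) = P_c(Y|Z)` of a filter `F`. -/
noncomputable def utilF {M N : ℕ} (P : Fin (M + 1) → Fin (N + 1) → ℝ)
    (F : Fin (N + 1) → Fin (N + 2) → ℝ) : ℝ :=
  ∑ z, ⨆ y, (∑ x, P x y) * F y z

/-- `F ∈ ℱ`: `F` is a row-stochastic `(N+1) × (N+2)` matrix. -/
def IsFilter {N : ℕ} (F : Fin (N + 1) → Fin (N + 2) → ℝ) : Prop :=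
  (∀ y z, 0 ≤ F y z) ∧ ∀ y, ∑ z, F y z = 1

/-- The privacy-constrained guessing function `h(ε)`. -/
noncomputable def hFun {M N : ℕ} (P : Fin (M + 1) → Fin (N + 1) → ℝ) (ε : ℝ) : ℝ :=
  sSup {u | ∃ F, IsFilter F ∧ privF P F ≤ ε ∧ u = utilF P F}

/-- `P_c(X)`. -/
noncomputable def PcX {M N : ℕ} (P : Fin (M + 1) → Fin (N + 1) → ℝ) : ℝ :=
  ⨆ x, ∑ y, P x y

/-- `P_c(X|Y)`. -/
noncomputable def PcXY {M N : ℕ} (P : Fin (M + 1) → Fin (N + 1) → ℝ) : ℝ :=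
  ∑ y, ⨆ x, P x y



lemma exists_argmax {κ : Type*} [Fintype κ] [Nonempty κ] (f : κ → ℝ) :
    ∃ x, (⨆ y, f y) = f x := by
  obtain ⟨x, hx⟩ := Finite.exists_max f
  exact ⟨x, le_antisymm (ciSup_le hx) (le_ciSup (Set.finite_range f).bddAbove x)⟩

lemma sum_ciSup_eq {ζ κ : Type*} [Fintype ζ] [Fintype κ] [Nonempty κ] (f : κ → ζ → ℝ) :
    ∑ z, ⨆ x, f x z = ⨆ t : ζ → κ, ∑ z, f (t z) z := by
  have hb : BddAbove (Set.range fun t : ζ → κ => ∑ z, f (t z) z) :=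
    (Set.finite_range _).bddAbove
  apply le_antisymm
  · have : ∀ z : ζ, ∃ x, (⨆ y, f y z) = f x z := fun z => exists_argmax _
    choose t ht using this
    calc ∑ z, ⨆ x, f x z = ∑ z, f (t z) z := by simp_rw [ht]
    _ ≤ _ := le_ciSup hb t
  · refine ciSup_le fun t => Finset.sum_le_sum fun z _ =>
      le_ciSup (Set.finite_range fun x => f x z).bddAbove (t z)

/-- ambient space -/
abbrev EE (N : ℕ) : Type := Fin (N + 1) → Fin (N + 2) → ℝ

/-- coordinate evaluation as a linear map -/
noncomputable def ev {N : ℕ} (y : Fin (N + 1)) (z : Fin (N + 2)) : EE N →ₗ[ℝ] ℝ :=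
  (LinearMap.proj (R := ℝ) (φ := fun _ : Fin (N + 2) => ℝ) z).comp
    (LinearMap.proj (R := ℝ) (φ := fun _ : Fin (N + 1) => Fin (N + 2) → ℝ) y)

@[simp] lemma ev_apply {N : ℕ} (y : Fin (N + 1)) (z : Fin (N + 2)) (F : EE N) :
    ev y z F = F y z := rfl

/-- constraint index type -/
abbrev CI (M N : ℕ) : Type :=
  (Fin (N + 1) × Fin (N + 2)) ⊕ ((Fin (N + 1) ⊕ Fin (N + 1)) ⊕ (Fin (N + 2) → Fin (M + 1)))

/-- constraint functionals -/
noncomputable def con {M N : ℕ} (P : Fin (M + 1) → Fin (N + 1) → ℝ) : CI M N → (EE N →ₗ[ℝ] ℝ)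
  | .inl (y, z) => -(ev y z)
  | .inr (.inl (.inl y)) => ∑ z, ev y z
  | .inr (.inl (.inr y)) => -(∑ z, ev y z)
  | .inr (.inr t) => ∑ z, ∑ y, P (t z) y • ev y z

/-- RHS slope -/
def cc {M N : ℕ} : CI M N → ℝ
  | .inr (.inr _) => 1
  | _ => 0

/-- RHS intercept -/
def dd {M N : ℕ} : CI M N → ℝ
  | .inl _ => 0
  | .inr (.inl (.inl _)) => 1
  | .inr (.inl (.inr _)) => -1
  | .inr (.inr _) => 0

lemma cc_nonneg {M N : ℕ} (i : CI M N) : 0 ≤ cc i := by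
  rcases i with _ | (_ | _) <;> simp [cc]

/-- feasible set -/
def QQ {M N : ℕ} (P : Fin (M + 1) → Fin (N + 1) → ℝ) (ε : ℝ) : Set (EE N) :=
  {F | ∀ i, con P i F ≤ cc i * ε + dd i}

lemma privF_eq_iSup {M N : ℕ} (P : Fin (M + 1) → Fin (N + 1) → ℝ) (F : EE N) :
    privF P F = ⨆ t : Fin (N + 2) → Fin (M + 1), ∑ z, ∑ y, P (t z) y * F y z :=
  sum_ciSup_eq (fun x z => ∑ y, P x y * F y z)

lemma utilF_eq_iSup {M N : ℕ} (P : Fin (M + 1) → Fin (N + 1) → ℝ) (F : EE N) :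
    utilF P F = ⨆ s : Fin (N + 2) → Fin (N + 1), ∑ z, (∑ x, P x (s z)) * F (s z) z :=
  sum_ciSup_eq (fun y z => (∑ x, P x y) * F y z)

lemma mem_QQ_iff {M N : ℕ} (P : Fin (M + 1) → Fin (N + 1) → ℝ) (ε : ℝ) (F : EE N) :
    F ∈ QQ P ε ↔ IsFilter F ∧ privF P F ≤ ε := by
  constructor
  · intro h
    have h1 : ∀ y z, 0 ≤ F y z := by
      intro y z
      have := h (.inl (y, z))
      simpa [con, cc, dd] using this
    have h2 : ∀ y, ∑ z, F y z = 1 := by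
      intro y
      have ha := h (.inr (.inl (.inl y)))
      have hb := h (.inr (.inl (.inr y)))
      simp [con, cc, dd] at ha hb
      linarith
    refine ⟨⟨h1, h2⟩, ?_⟩
    rw [privF_eq_iSup]
    refine ciSup_le fun t => ?_
    have := h (.inr (.inr t))
    simpa [con, cc, dd] using this
  · rintro ⟨⟨h1, h2⟩, h3⟩ i
    rcases i with ⟨y, z⟩ | ((y | y) | t)
    · simpa [con, cc, dd] using h1 y z
    · simp [con, cc, dd, h2 y]
    · simp [con, cc, dd, h2 y]
    · simp only [con, cc, dd, one_mul, add_zero]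
      rw [privF_eq_iSup] at h3
      refine le_trans ?_ h3
      have := le_ciSup (Set.finite_range fun t : Fin (N+2) → Fin (M+1) =>
        ∑ z, ∑ y, P (t z) y * F y z).bddAbove t
      simpa [con] using this

section Chunk3
variable {M N : ℕ} (P : Fin (M + 1) → Fin (N + 1) → ℝ)

/-- utility selection functionals -/
noncomputable def Us (s : Fin (N + 2) → Fin (N + 1)) : EE N →ₗ[ℝ] ℝ :=
  ∑ z, (∑ x, P x (s z)) • ev (s z) z

lemma Us_apply (s : Fin (N + 2) → Fin (N + 1)) (F : EE N) :
    Us P s F = ∑ z, (∑ x, P x (s z)) * F (s z) z := by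
  simp [Us, smul_eq_mul]

lemma utilF_eq_iSup_Us (F : EE N) : utilF P F = ⨆ s : Fin (N + 2) → Fin (N + 1), Us P s F := by
  rw [utilF_eq_iSup]
  have : ∀ s : Fin (N + 2) → Fin (N + 1), ∑ z, (∑ x, P x (s z)) * F (s z) z = Us P s F :=
    fun s => (Us_apply P s F).symm
  simp_rw [this]

lemma Us_le_utilF (s : Fin (N + 2) → Fin (N + 1)) (F : EE N) : Us P s F ≤ utilF P F := by
  rw [utilF_eq_iSup_Us]
  exact le_ciSup (Set.finite_range fun s' => Us P s' F).bddAbove s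

lemma exists_Us_eq_utilF (F : EE N) : ∃ s, utilF P F = Us P s F := by
  rw [utilF_eq_iSup_Us]; exact exists_argmax fun s => Us P s F

lemma Us_nonneg (hpos : ∀ x y, 0 ≤ P x y) (s : Fin (N + 2) → Fin (N + 1)) (F : EE N)
    (hF : ∀ y z, 0 ≤ F y z) : 0 ≤ Us P s F := by
  rw [Us_apply]
  exact Finset.sum_nonneg fun z _ => mul_nonneg (Finset.sum_nonneg fun x _ => hpos x _) (hF _ _)

lemma utilF_le_one (hpos : ∀ x y, 0 ≤ P x y) (hsum : ∑ x, ∑ y, P x y = 1) (F : EE N)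
    (hF : IsFilter F) : utilF P F ≤ 1 := by
  have key : ∀ z, (⨆ y, (∑ x, P x y) * F y z) ≤ ∑ y, (∑ x, P x y) * F y z := by
    intro z
    refine ciSup_le fun y => Finset.single_le_sum (f := fun y' => (∑ x, P x y') * F y' z)
      (fun y' _ => mul_nonneg (Finset.sum_nonneg fun x _ => hpos x _) (hF.1 y' z))
      (Finset.mem_univ y)
  calc utilF P F ≤ ∑ z, ∑ y, (∑ x, P x y) * F y z := Finset.sum_le_sum fun z _ => key z
  _ = ∑ y, (∑ x, P x y) * ∑ z, F y z := by rw [Finset.sum_comm]; simp [Finset.mul_sum]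
  _ = ∑ y, ∑ x, P x y := by simp [hF.2]
  _ = 1 := by rw [← Finset.sum_comm]; exact hsum

end Chunk3

section Chunk4
variable {M N : ℕ} (P : Fin (M + 1) → Fin (N + 1) → ℝ)

lemma QQ_entries (ε : ℝ) {F : EE N} (hF : F ∈ QQ P ε) : ∀ y z, 0 ≤ F y z ∧ F y z ≤ 1 := by
  rw [mem_QQ_iff] at hF
  intro y z
  refine ⟨hF.1.1 y z, ?_⟩
  calc F y z ≤ ∑ z', F y z' :=
    Finset.single_le_sum (f := fun z' => F y z') (fun z' _ => hF.1.1 y z') (Finset.mem_univ z)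
  _ = 1 := hF.1.2 y

lemma QQ_subset_Icc (ε : ℝ) : QQ P ε ⊆ Set.Icc (0 : EE N) 1 := by
  intro F hF
  constructor <;> intro y <;> intro z <;> have := QQ_entries P ε hF y z
  · exact this.1
  · exact this.2

lemma con_continuous (i : CI M N) : Continuous (con P i) :=
  LinearMap.continuous_of_finiteDimensional _

lemma QQ_isClosed (ε : ℝ) : IsClosed (QQ P ε) := by
  have : QQ P ε = ⋂ i, {F : EE N | con P i F ≤ cc i * ε + dd i} := by
    ext F; simp [QQ, Set.mem_iInter]
  rw [this]
  exact isClosed_iInter fun i => isClosed_le (con_continuous P i) continuous_const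

lemma QQ_isCompact (ε : ℝ) : IsCompact (QQ P ε) :=
  (isCompact_Icc).of_isClosed_subset (QQ_isClosed P ε) (QQ_subset_Icc P ε)

/-- the all-in-one-column filter -/
noncomputable def F0 {N : ℕ} : EE N := fun _ z => if z = 0 then 1 else 0

lemma F0_isFilter : IsFilter (F0 : EE N) := by
  constructor
  · intro y z; simp only [F0]; split <;> norm_num
  · intro y; simp [F0]

lemma privF_F0 : privF P (F0 : EE N) = PcX P := by
  have h0 : ∀ z : Fin (N + 2), (⨆ x, ∑ y, P x y * F0 y z) =
      if z = 0 then (⨆ x, ∑ y, P x y) else 0 := by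
    intro z
    split
    · rename_i h; subst h
      exact iSup_congr fun x => by simp [F0]
    · rename_i h
      have : ∀ x : Fin (M + 1), ∑ y, P x y * F0 y z = 0 := by
        intro x; simp [F0, h]
      simp_rw [this]
      exact ciSup_const
  rw [privF]
  simp_rw [h0]
  simp [PcX]

lemma F0_mem_QQ {ε : ℝ} (hε : PcX P ≤ ε) : (F0 : EE N) ∈ QQ P ε := by
  rw [mem_QQ_iff]
  exact ⟨F0_isFilter, by rw [privF_F0]; exact hε⟩

lemma privF_ge (F : EE N) (hF : IsFilter F) : PcX P ≤ privF P F := by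
  rw [privF_eq_iSup]
  have key : ∀ x : Fin (M + 1), ∑ y, P x y ≤
      ⨆ t : Fin (N + 2) → Fin (M + 1), ∑ z, ∑ y, P (t z) y * F y z := by
    intro x
    have h1 : ∑ z, ∑ y, P x y * F y z = ∑ y, P x y := by
      rw [Finset.sum_comm]
      simp [← Finset.mul_sum, hF.2]
    calc ∑ y, P x y = ∑ z, ∑ y, P ((fun _ => x) z) y * F y z := h1.symm
    _ ≤ _ := le_ciSup (Set.finite_range fun t : Fin (N + 2) → Fin (M + 1) =>
        ∑ z, ∑ y, P (t z) y * F y z).bddAbove (fun _ => x)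
  exact ciSup_le key

lemma privF_le (hpos : ∀ x y, 0 ≤ P x y) (F : EE N) (hF : IsFilter F) :
    privF P F ≤ PcXY P := by
  have key : ∀ z, (⨆ x, ∑ y, P x y * F y z) ≤ ∑ y, (⨆ x, P x y) * F y z := by
    intro z
    refine ciSup_le fun x => Finset.sum_le_sum fun y _ => ?_
    exact mul_le_mul_of_nonneg_right (le_ciSup (Set.finite_range fun x' => P x' y).bddAbove x)
      (hF.1 y z)
  calc privF P F ≤ ∑ z, ∑ y, (⨆ x, P x y) * F y z := Finset.sum_le_sum fun z _ => key z
  _ = ∑ y, (⨆ x, P x y) * ∑ z, F y z := by rw [Finset.sum_comm]; simp [Finset.mul_sum]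
  _ = PcXY P := by simp [hF.2, PcXY]

lemma PcX_le_PcXY (hpos : ∀ x y, 0 ≤ P x y) : PcX P ≤ PcXY P := by
  calc PcX P ≤ privF P (F0 : EE N) := privF_ge P F0 F0_isFilter
  _ ≤ PcXY P := privF_le P hpos F0 F0_isFilter

lemma SS_eq (ε : ℝ) :
    {u | ∃ F, IsFilter F ∧ privF P F ≤ ε ∧ u = utilF P F} = utilF P '' QQ P ε := by
  ext u
  simp only [Set.mem_image, Set.mem_setOf_eq, mem_QQ_iff]
  constructor
  · rintro ⟨F, h1, h2, h3⟩; exact ⟨F, ⟨h1, h2⟩, h3.symm⟩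
  · rintro ⟨F, ⟨h1, h2⟩, h3⟩; exact ⟨F, h1, h2, h3.symm⟩

lemma SS_bddAbove (hpos : ∀ x y, 0 ≤ P x y) (hsum : ∑ x, ∑ y, P x y = 1) (ε : ℝ) :
    BddAbove {u | ∃ F, IsFilter F ∧ privF P F ≤ ε ∧ u = utilF P F} := by
  refine ⟨1, fun u hu => ?_⟩
  obtain ⟨F, h1, _, h3⟩ := hu
  rw [h3]
  exact utilF_le_one P hpos hsum F h1

lemma utilF_le_hFun (hpos : ∀ x y, 0 ≤ P x y) (hsum : ∑ x, ∑ y, P x y = 1) {ε : ℝ}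
    {F : EE N} (hF : F ∈ QQ P ε) : utilF P F ≤ hFun P ε := by
  rw [mem_QQ_iff] at hF
  exact le_csSup (SS_bddAbove P hpos hsum ε) ⟨F, hF.1, hF.2, rfl⟩

lemma hFun_le_one (hpos : ∀ x y, 0 ≤ P x y) (hsum : ∑ x, ∑ y, P x y = 1) {ε : ℝ}
    (hε : PcX P ≤ ε) : hFun P ε ≤ 1 := by
  refine csSup_le ?_ fun u hu => ?_
  · exact ⟨utilF P F0, F0, F0_isFilter, by rw [privF_F0]; exact hε, rfl⟩
  · obtain ⟨F, h1, _, h3⟩ := hu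
    rw [h3]; exact utilF_le_one P hpos hsum F h1

lemma hFun_mono (hpos : ∀ x y, 0 ≤ P x y) (hsum : ∑ x, ∑ y, P x y = 1) {ε1 ε2 : ℝ}
    (h1 : PcX P ≤ ε1) (h12 : ε1 ≤ ε2) : hFun P ε1 ≤ hFun P ε2 := by
  refine csSup_le_csSup (SS_bddAbove P hpos hsum ε2)
    ⟨utilF P F0, F0, F0_isFilter, by rw [privF_F0]; exact h1, rfl⟩ ?_
  rintro u ⟨F, hf, hp, hu⟩
  exact ⟨F, hf, le_trans hp h12, hu⟩

/-- value of the LP with objective `Us s` -/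
noncomputable def Vs (s : Fin (N + 2) → Fin (N + 1)) (ε : ℝ) : ℝ :=
  sSup (Us P s '' QQ P ε)

lemma Vs_attained (s : Fin (N + 2) → Fin (N + 1)) {ε : ℝ} (hne : (QQ P ε).Nonempty) :
    ∃ F ∈ QQ P ε, Us P s F = Vs P s ε ∧ ∀ G ∈ QQ P ε, Us P s G ≤ Us P s F := by
  obtain ⟨F, hF, hmax⟩ := (QQ_isCompact P ε).exists_isMaxOn hne
    (LinearMap.continuous_of_finiteDimensional (Us P s)).continuousOn
  refine ⟨F, hF, ?_, fun G hG => hmax hG⟩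
  have hg : IsGreatest (Us P s '' QQ P ε) (Us P s F) :=
    ⟨⟨F, hF, rfl⟩, by rintro u ⟨G, hG, rfl⟩; exact hmax hG⟩
  exact hg.csSup_eq.symm

lemma le_Vs (s : Fin (N + 2) → Fin (N + 1)) {ε : ℝ} (hne : (QQ P ε).Nonempty)
    {F : EE N} (hF : F ∈ QQ P ε) : Us P s F ≤ Vs P s ε := by
  obtain ⟨G, hG, hV, hmax⟩ := Vs_attained P s hne
  rw [← hV]; exact hmax F hF

lemma hFun_eq_iSup_Vs (hpos : ∀ x y, 0 ≤ P x y) (hsum : ∑ x, ∑ y, P x y = 1) {ε : ℝ}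
    (hε : PcX P ≤ ε) : hFun P ε = ⨆ s : Fin (N + 2) → Fin (N + 1), Vs P s ε := by
  have hne : (QQ P ε).Nonempty := ⟨F0, F0_mem_QQ P hε⟩
  apply le_antisymm
  · refine csSup_le ⟨utilF P F0, F0, F0_isFilter, by rw [privF_F0]; exact hε, rfl⟩ ?_
    rintro u ⟨F, hf, hp, hu⟩
    have hFQ : F ∈ QQ P ε := (mem_QQ_iff P ε F).2 ⟨hf, hp⟩
    rw [hu, utilF_eq_iSup_Us]
    refine ciSup_le fun s => ?_
    calc Us P s F ≤ Vs P s ε := le_Vs P s hne hFQ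
    _ ≤ _ := le_ciSup (Set.finite_range fun s' => Vs P s' ε).bddAbove s
  · refine ciSup_le fun s => ?_
    obtain ⟨F, hF, hV, _⟩ := Vs_attained P s hne
    calc Vs P s ε = Us P s F := hV.symm
    _ ≤ utilF P F := Us_le_utilF P s F
    _ ≤ hFun P ε := utilF_le_hFun P hpos hsum hF

lemma Vs_mono (s : Fin (N + 2) → Fin (N + 1)) {ε1 ε2 : ℝ} (hne : (QQ P ε1).Nonempty)
    (h12 : ε1 ≤ ε2) : Vs P s ε1 ≤ Vs P s ε2 := by
  have hsub : QQ P ε1 ⊆ QQ P ε2 := by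
    intro F hF i
    calc con P i F ≤ cc i * ε1 + dd i := hF i
    _ ≤ cc i * ε2 + dd i := by
      have := mul_le_mul_of_nonneg_left h12 (cc_nonneg i)
      linarith
  have hne2 : (QQ P ε2).Nonempty := hne.mono hsub
  obtain ⟨F, hF, hV, _⟩ := Vs_attained P s hne
  rw [← hV]
  exact le_Vs P s hne2 (hsub hF)

end Chunk4

section Chunk5
variable {M N : ℕ} (P : Fin (M + 1) → Fin (N + 1) → ℝ)

lemma hFun_attained (hpos : ∀ x y, 0 ≤ P x y) (hsum : ∑ x, ∑ y, P x y = 1) {ε : ℝ}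
    (hε : PcX P ≤ ε) : ∃ F ∈ QQ P ε, utilF P F = hFun P ε := by
  have hne : (QQ P ε).Nonempty := ⟨F0, F0_mem_QQ P hε⟩
  obtain ⟨sstar, hs⟩ := exists_argmax fun s : Fin (N + 2) → Fin (N + 1) => Vs P s ε
  obtain ⟨F, hF, hV, _⟩ := Vs_attained P sstar hne
  refine ⟨F, hF, le_antisymm (utilF_le_hFun P hpos hsum hF) ?_⟩
  calc hFun P ε = Vs P sstar ε := by rw [hFun_eq_iSup_Vs P hpos hsum hε, hs]
  _ = Us P sstar F := hV.symm
  _ ≤ utilF P F := Us_le_utilF P sstar F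

/-- intersection of kernels of active constraints -/
noncomputable def actW (ε : ℝ) (F : EE N) : Submodule ℝ (EE N) :=
  ⨅ i ∈ {i : CI M N | con P i F = cc i * ε + dd i}, LinearMap.ker (con P i)

lemma mem_actW (ε : ℝ) (F v : EE N) :
    v ∈ actW P ε F ↔ ∀ i, con P i F = cc i * ε + dd i → con P i v = 0 := by
  simp [actW, Submodule.mem_iInf, LinearMap.mem_ker]

lemma exists_basic_opt (hpos : ∀ x y, 0 ≤ P x y) (hsum : ∑ x, ∑ y, P x y = 1) {ε : ℝ}
    (hε : PcX P ≤ ε) :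
    ∃ F ∈ QQ P ε, utilF P F = hFun P ε ∧ actW P ε F = ⊥ := by
  set S : Set ℕ :=
    {n | ∃ F, F ∈ QQ P ε ∧ utilF P F = hFun P ε ∧ Module.finrank ℝ (actW P ε F) = n} with hS
  have hSne : S.Nonempty := by
    obtain ⟨F, hF, hu⟩ := hFun_attained P hpos hsum hε
    exact ⟨_, F, hF, hu, rfl⟩
  obtain ⟨F, hFQ, hFu, hFr⟩ := Nat.sInf_mem hSne
  by_cases h0 : Module.finrank ℝ (actW P ε F) = 0
  · exact ⟨F, hFQ, hFu, Submodule.finrank_eq_zero.mp h0⟩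
  exfalso
  have hbot : actW P ε F ≠ ⊥ := by
    intro hb
    exact h0 (by rw [hb]; exact finrank_bot ℝ (EE N))
  obtain ⟨v0, hv0mem, hv0ne⟩ := Submodule.ne_bot_iff _ |>.mp hbot
  obtain ⟨sstar, hs⟩ := exists_Us_eq_utilF P F
  set v := if 0 ≤ Us P sstar v0 then v0 else -v0 with hv
  have hvmem : v ∈ actW P ε F := by
    rw [hv]; split
    · exact hv0mem
    · exact Submodule.neg_mem _ hv0mem
  have hvne : v ≠ 0 := by
    rw [hv]; split
    · exact hv0ne
    · exact neg_ne_zero.mpr hv0ne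
  have hvpos : 0 ≤ Us P sstar v := by
    rw [hv]; split
    · assumption
    · rename_i h
      rw [map_neg]
      linarith [lt_of_not_ge h]
  set T : Set ℝ := {t | 0 ≤ t ∧ F + t • v ∈ QQ P ε} with hT
  have hT0 : (0 : ℝ) ∈ T := ⟨le_refl 0, by simpa using hFQ⟩
  have hTeq : T = Set.Ici (0 : ℝ) ∩
      ⋂ i, {t : ℝ | con P i F + t * con P i v ≤ cc i * ε + dd i} := by
    ext t
    simp only [hT, Set.mem_setOf_eq, Set.mem_inter_iff, Set.mem_Ici, Set.mem_iInter, QQ,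
      map_add, map_smul, smul_eq_mul]
  have hTclosed : IsClosed T := by
    rw [hTeq]
    exact isClosed_Ici.inter (isClosed_iInter fun i =>
      isClosed_le (continuous_const.add (continuous_id.mul continuous_const)) continuous_const)
  have hTbdd : BddAbove T := by
    have : ∃ y z, v y z ≠ 0 := by
      by_contra hc
      push_neg at hc
      exact hvne (funext fun y => funext fun z => hc y z)
    obtain ⟨y, z, hyz⟩ := this
    refine ⟨1 / |v y z|, fun t ht => ?_⟩
    obtain ⟨ht0, htQ⟩ := ht
    have h1 := QQ_entries P ε htQ y z
    have h2 := QQ_entries P ε hFQ y z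
    have h3 : (F + t • v) y z = F y z + t * v y z := by simp [smul_eq_mul]
    have habs : |t * v y z| ≤ 1 := by
      rw [h3] at h1
      rw [abs_le]
      constructor <;> linarith [h1.1, h1.2, h2.1, h2.2]
    rw [le_div_iff₀ (abs_pos.mpr hyz)]
    calc t * |v y z| = |t| * |v y z| := by rw [abs_of_nonneg ht0]
    _ = |t * v y z| := (abs_mul t (v y z)).symm
    _ ≤ 1 := habs
  have htT : sSup T ∈ T := hTclosed.csSup_mem ⟨0, hT0⟩ hTbdd
  set F' := F + sSup T • v with hF'
  have hF'Q : F' ∈ QQ P ε := htT.2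
  have hstar0 : 0 ≤ sSup T := htT.1
  have hF'u : utilF P F' = hFun P ε := by
    refine le_antisymm (utilF_le_hFun P hpos hsum hF'Q) ?_
    calc hFun P ε = utilF P F := hFu.symm
    _ = Us P sstar F := hs
    _ ≤ Us P sstar F + sSup T * Us P sstar v := by nlinarith
    _ = Us P sstar F' := by rw [hF', map_add, map_smul, smul_eq_mul]
    _ ≤ utilF P F' := Us_le_utilF P sstar F'
  have hactmono : ∀ i, con P i F = cc i * ε + dd i → con P i F' = cc i * ε + dd i := by
    intro i hi
    rw [hF', map_add, map_smul, smul_eq_mul, (mem_actW P ε F v).mp hvmem i hi, mul_zero,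
      add_zero, hi]
  have hnew : ∃ i, con P i F' = cc i * ε + dd i ∧ 0 < con P i v := by
    by_contra hno
    push_neg at hno
    set δ : CI M N → ℝ := fun i =>
      if h : 0 < con P i v then (cc i * ε + dd i - con P i F') / con P i v else 1 with hδ
    have hδpos : ∀ i, 0 < δ i := by
      intro i
      rw [hδ]
      dsimp only
      split
      · rename_i h
        have hlt : con P i F' < cc i * ε + dd i :=
          lt_of_le_of_ne (hF'Q i) (fun he => absurd h (not_lt.mpr (hno i he)))
        exact div_pos (by linarith) h
      · norm_num
    set tp := Finset.univ.inf' Finset.univ_nonempty δ with htpdef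
    have htp : 0 < tp := by
      rw [htpdef, Finset.lt_inf'_iff]
      exact fun i _ => hδpos i
    have hmemT : sSup T + tp ∈ T := by
      refine ⟨by linarith, fun i => ?_⟩
      have hexp : con P i (F + (sSup T + tp) • v) = con P i F' + tp * con P i v := by
        rw [hF']
        simp only [map_add, map_smul, smul_eq_mul]
        ring
      rw [hexp]
      by_cases hcv : 0 < con P i v
      · have htple : tp ≤ δ i := Finset.inf'_le δ (Finset.mem_univ i)
        rw [hδ] at htple
        dsimp only at htple
        rw [dif_pos hcv] at htple
        have := (le_div_iff₀ hcv).mp htple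
        linarith
      · have h1 : tp * con P i v ≤ 0 :=
          mul_nonpos_of_nonneg_of_nonpos htp.le (not_lt.mp hcv)
        linarith [hF'Q i]
    have := le_csSup hTbdd hmemT
    linarith
  obtain ⟨i0, hi0act, hi0v⟩ := hnew
  have hlt : actW P ε F' < actW P ε F := by
    refine lt_of_le_of_ne ?_ ?_
    · intro x hx
      rw [mem_actW] at hx ⊢
      exact fun i hi => hx i (hactmono i hi)
    · intro he
      have : v ∈ actW P ε F' := he ▸ hvmem
      exact hi0v.ne' ((mem_actW P ε F' v).mp this i0 hi0act)
  have hrank : Module.finrank ℝ (actW P ε F') < sInf S := by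
    rw [← hFr]
    exact Submodule.finrank_lt_finrank_of_lt hlt
  have hmem : Module.finrank ℝ (actW P ε F') ∈ S := by
    rw [hS]
    exact ⟨F', hF'Q, hF'u, rfl⟩
  exact absurd (Nat.sInf_le hmem) (not_le.mpr hrank)

end Chunk5

section Chunk6
variable {M N : ℕ} (P : Fin (M + 1) → Fin (N + 1) → ℝ)

noncomputable def LJ (J : Finset (CI M N)) : EE N →ₗ[ℝ] (CI M N → ℝ) :=
  LinearMap.pi fun i => if i ∈ J then con P i else 0

lemma LJ_apply (J : Finset (CI M N)) (F : EE N) (i : CI M N) :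
    LJ P J F i = if i ∈ J then con P i F else 0 := by
  simp only [LJ, LinearMap.pi_apply]
  split <;> rfl

open Classical in
noncomputable def GJ (J : Finset (CI M N)) : (CI M N → ℝ) →ₗ[ℝ] EE N :=
  if h : LinearMap.ker (LJ P J) = ⊥ then
    (LinearMap.exists_leftInverse_of_injective _ h).choose else 0

lemma GJ_left_inv (J : Finset (CI M N)) (h : LinearMap.ker (LJ P J) = ⊥) (F : EE N) :
    GJ P J (LJ P J F) = F := by
  have hspec := (LinearMap.exists_leftInverse_of_injective (LJ P J) h).choose_spec
  rw [GJ]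
  rw [dif_pos h]
  have := LinearMap.ext_iff.mp hspec F
  simpa using this

def wv (J : Finset (CI M N)) : CI M N → ℝ := fun i => if i ∈ J then cc i else 0
def dv (J : Finset (CI M N)) : CI M N → ℝ := fun i => if i ∈ J then dd i else 0

/-- finite family of candidate affine coefficient pairs -/
noncomputable def cands : Finset (ℝ × ℝ) :=
  Finset.univ.image fun Js : Finset (CI M N) × (Fin (N + 2) → Fin (N + 1)) =>
    (Us P Js.2 (GJ P Js.1 (wv Js.1)), Us P Js.2 (GJ P Js.1 (dv Js.1)))

lemma hFun_selection (hpos : ∀ x y, 0 ≤ P x y) (hsum : ∑ x, ∑ y, P x y = 1) {ε : ℝ}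
    (hε : PcX P ≤ ε) : ∃ p ∈ cands P, hFun P ε = p.1 * ε + p.2 := by
  obtain ⟨F, hFQ, hFu, hact⟩ := exists_basic_opt P hpos hsum hε
  set J := Set.Finite.toFinset (Set.toFinite {i : CI M N | con P i F = cc i * ε + dd i}) with hJ
  have hmemJ : ∀ i, i ∈ J ↔ con P i F = cc i * ε + dd i := by
    intro i
    rw [hJ, Set.Finite.mem_toFinset]
    rfl
  have hkerJ : LinearMap.ker (LJ P J) = ⊥ := by
    rw [Submodule.eq_bot_iff]
    intro x hx
    have hx0 : ∀ i, LJ P J x i = 0 := by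
      intro i
      rw [LinearMap.mem_ker] at hx
      rw [hx]
      rfl
    have hxact : x ∈ actW P ε F := by
      rw [mem_actW]
      intro i hi
      have := hx0 i
      rwa [LJ_apply, if_pos ((hmemJ i).mpr hi)] at this
    rw [hact] at hxact
    simpa using hxact
  have hrec : F = GJ P J (fun i => if i ∈ J then cc i * ε + dd i else 0) := by
    have h1 : LJ P J F = fun i => if i ∈ J then cc i * ε + dd i else 0 := by
      funext i
      rw [LJ_apply]
      by_cases hi : i ∈ J
      · rw [if_pos hi, if_pos hi, (hmemJ i).mp hi]
      · rw [if_neg hi, if_neg hi]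
    rw [← h1, GJ_left_inv P J hkerJ F]
  obtain ⟨s, hsu⟩ := exists_Us_eq_utilF P F
  refine ⟨(Us P s (GJ P J (wv J)), Us P s (GJ P J (dv J))), ?_, ?_⟩
  · rw [cands, Finset.mem_image]
    exact ⟨(J, s), Finset.mem_univ _, rfl⟩
  have hsplit : (fun i => if i ∈ J then cc i * ε + dd i else 0) = ε • wv J + dv J := by
    funext i
    simp only [wv, dv, Pi.add_apply, Pi.smul_apply, smul_eq_mul]
    by_cases hi : i ∈ J
    · rw [if_pos hi, if_pos hi, if_pos hi]; ring
    · rw [if_neg hi, if_neg hi, if_neg hi]; ring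
  rw [← hFu, hsu, hrec, hsplit, map_add, map_smul, map_add, map_smul, smul_eq_mul]
  ring

end Chunk6

section Chunk7
variable {M N : ℕ} (P : Fin (M + 1) → Fin (N + 1) → ℝ)

lemma QQ_mono {ε1 ε2 : ℝ} (h12 : ε1 ≤ ε2) : QQ P ε1 ⊆ QQ P ε2 := by
  intro F hF i
  have := mul_le_mul_of_nonneg_left h12 (cc_nonneg i)
  calc con P i F ≤ cc i * ε1 + dd i := hF i
  _ ≤ cc i * ε2 + dd i := by linarith

lemma hFun_left_estimate (hpos : ∀ x y, 0 ≤ P x y) (hsum : ∑ x, ∑ y, P x y = 1)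
    {ε0 ε : ℝ} (hA : PcX P < ε0) (hε : PcX P ≤ ε) (hle : ε ≤ ε0) :
    hFun P ε0 - (ε0 - ε) / (ε0 - PcX P) ≤ hFun P ε := by
  set A := PcX P with hAdef
  set t := (ε0 - ε) / (ε0 - A) with ht
  have hden : 0 < ε0 - A := by linarith
  have ht0 : 0 ≤ t := div_nonneg (by linarith) hden.le
  have ht1 : t ≤ 1 := by
    rw [ht, div_le_one hden]
    linarith
  obtain ⟨F, hFQ, hFu⟩ := hFun_attained P hpos hsum hA.le
  set F' : EE N := (1 - t) • F + t • (F0 : EE N) with hF'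
  have hF'Q : F' ∈ QQ P ε := by
    intro i
    have h1 : con P i F ≤ cc i * ε0 + dd i := hFQ i
    have h2 : con P i (F0 : EE N) ≤ cc i * A + dd i := F0_mem_QQ P (le_refl A) i
    have hexp : con P i F' = (1 - t) * con P i F + t * con P i (F0 : EE N) := by
      rw [hF', map_add, map_smul, map_smul, smul_eq_mul, smul_eq_mul]
    rw [hexp]
    have e1 : (1 - t) * con P i F ≤ (1 - t) * (cc i * ε0 + dd i) :=
      mul_le_mul_of_nonneg_left h1 (by linarith)
    have e2 : t * con P i (F0 : EE N) ≤ t * (cc i * A + dd i) :=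
      mul_le_mul_of_nonneg_left h2 ht0
    have key : (1 - t) * ε0 + t * A = ε := by
      rw [ht]
      field_simp
      ring
    nlinarith [cc_nonneg i]
  obtain ⟨s, hsu⟩ := exists_Us_eq_utilF P F
  have hU0 : 0 ≤ Us P s (F0 : EE N) := Us_nonneg P hpos s F0 F0_isFilter.1
  have hUF' : Us P s F' = (1 - t) * Us P s F + t * Us P s (F0 : EE N) := by
    rw [hF', map_add, map_smul, map_smul, smul_eq_mul, smul_eq_mul]
  have h1le : hFun P ε0 ≤ 1 := hFun_le_one P hpos hsum hA.le
  calc hFun P ε0 - t ≤ (1 - t) * hFun P ε0 := by nlinarith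
  _ = (1 - t) * Us P s F := by rw [← hFu, hsu]
  _ ≤ Us P s F' := by nlinarith [Us_nonneg P hpos s F (((mem_QQ_iff P ε0 F).mp hFQ).1.1)]
  _ ≤ utilF P F' := Us_le_utilF P s F'
  _ ≤ hFun P ε := utilF_le_hFun P hpos hsum hF'Q

lemma Vs_right_estimate (s : Fin (N + 2) → Fin (N + 1)) {ε0 δ : ℝ}
    (hε0 : PcX P ≤ ε0) (hB : ε0 < PcXY P) (hδ : 0 < δ) :
    ∃ ε1, ε0 < ε1 ∧ ε1 ≤ PcXY P ∧ Vs P s ε1 ≤ Vs P s ε0 + δ := by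
  set B := PcXY P with hBdef
  set e : ℕ → ℝ := fun k => ε0 + (B - ε0) * (1 / (k + 1)) with he
  have hBe : 0 < B - ε0 := by linarith
  have hepos : ∀ k : ℕ, ε0 < e k := by
    intro k
    have : (0 : ℝ) < 1 / ((k : ℝ) + 1) := by positivity
    rw [he]
    dsimp only
    nlinarith
  have heB : ∀ k : ℕ, e k ≤ B := by
    intro k
    have h1 : (1 : ℝ) / ((k : ℝ) + 1) ≤ 1 := by
      rw [div_le_one (by positivity)]
      simp [Nat.cast_nonneg]
    rw [he]
    dsimp only
    nlinarith
  have hene : ∀ k : ℕ, (QQ P (e k)).Nonempty :=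
    fun k => ⟨F0, F0_mem_QQ P (le_trans hε0 (hepos k).le)⟩
  have hFk : ∀ k : ℕ, ∃ F ∈ QQ P (e k), Us P s F = Vs P s (e k) := by
    intro k
    obtain ⟨F, hF, hV, _⟩ := Vs_attained P s (hene k)
    exact ⟨F, hF, hV⟩
  choose Fk hFkQ hFkV using hFk
  have hFkB : ∀ k, Fk k ∈ QQ P B := fun k => QQ_mono P (heB k) (hFkQ k)
  obtain ⟨a, haB, φ, hφ, htend⟩ := tendsto_subseq_of_bounded
    ((QQ_isCompact P B).isBounded) hFkB
  rw [(QQ_isClosed P B).closure_eq] at haB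
  have hetend : Filter.Tendsto (fun k => e (φ k)) Filter.atTop (nhds ε0) := by
    have h1 : Filter.Tendsto (fun k : ℕ => 1 / ((k : ℝ) + 1)) Filter.atTop (nhds 0) :=
      tendsto_one_div_add_atTop_nhds_zero_nat
    have h2 : Filter.Tendsto (fun k : ℕ => e k) Filter.atTop (nhds ε0) := by
      have := (h1.const_mul (B - ε0)).const_add ε0
      simpa [he] using this
    exact h2.comp hφ.tendsto_atTop
  have haQ : a ∈ QQ P ε0 := by
    intro i
    have hc : Filter.Tendsto (fun k => con P i (Fk (φ k))) Filter.atTop (nhds (con P i a)) :=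
      ((con_continuous P i).continuousAt.tendsto).comp htend
    have hrhs : Filter.Tendsto (fun k => cc i * e (φ k) + dd i) Filter.atTop
        (nhds (cc i * ε0 + dd i)) := by
      exact ((hetend.const_mul (cc i)).add_const (dd i)).congr (fun k => by ring)
    exact le_of_tendsto_of_tendsto' hc hrhs fun k => hFkQ (φ k) i
  have hUa : Us P s a ≤ Vs P s ε0 :=
    le_Vs P s ⟨F0, F0_mem_QQ P hε0⟩ haQ
  have hUtend : Filter.Tendsto (fun k => Us P s (Fk (φ k))) Filter.atTop (nhds (Us P s a)) :=
    ((LinearMap.continuous_of_finiteDimensional (Us P s)).continuousAt.tendsto).comp htend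
  have hev : ∀ᶠ k in Filter.atTop, Us P s (Fk (φ k)) < Us P s a + δ :=
    hUtend.eventually_lt_const (lt_add_of_pos_right _ hδ)
  obtain ⟨k, hk⟩ := hev.exists
  refine ⟨e (φ k), hepos (φ k), heB (φ k), ?_⟩
  calc Vs P s (e (φ k)) = Us P s (Fk (φ k)) := (hFkV (φ k)).symm
  _ ≤ Us P s a + δ := hk.le
  _ ≤ Vs P s ε0 + δ := by linarith

lemma hFun_right_estimate (hpos : ∀ x y, 0 ≤ P x y) (hsum : ∑ x, ∑ y, P x y = 1)
    {ε0 δ : ℝ} (hε0 : PcX P ≤ ε0) (hB : ε0 < PcXY P) (hδ : 0 < δ) :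
    ∃ ε1, ε0 < ε1 ∧ ε1 ≤ PcXY P ∧ hFun P ε1 ≤ hFun P ε0 + δ := by
  have hch : ∀ s : Fin (N + 2) → Fin (N + 1),
      ∃ ε1, ε0 < ε1 ∧ ε1 ≤ PcXY P ∧ Vs P s ε1 ≤ Vs P s ε0 + δ :=
    fun s => Vs_right_estimate P s hε0 hB hδ
  choose e1 he1gt he1le he1V using hch
  set ε1 := Finset.univ.inf' Finset.univ_nonempty e1 with hε1
  have hgt : ε0 < ε1 := by
    rw [hε1, Finset.lt_inf'_iff]
    exact fun s _ => he1gt s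
  obtain ⟨s0, _, hs0⟩ := Finset.exists_mem_eq_inf' Finset.univ_nonempty e1
  have hle : ε1 ≤ PcXY P := by
    rw [hε1, hs0]
    exact he1le s0
  refine ⟨ε1, hgt, hle, ?_⟩
  have hA1 : PcX P ≤ ε1 := le_trans hε0 hgt.le
  rw [hFun_eq_iSup_Vs P hpos hsum hA1, hFun_eq_iSup_Vs P hpos hsum hε0]
  refine ciSup_le fun s => ?_
  have h1 : Vs P s ε1 ≤ Vs P s (e1 s) :=
    Vs_mono P s ⟨F0, F0_mem_QQ P hA1⟩ (by rw [hε1]; exact Finset.inf'_le e1 (Finset.mem_univ s))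
  have h2 : Vs P s ε0 ≤ ⨆ s', Vs P s' ε0 :=
    le_ciSup (Set.finite_range fun s' => Vs P s' ε0).bddAbove s
  linarith [he1V s]

lemma hFun_continuousOn (hpos : ∀ x y, 0 ≤ P x y) (hsum : ∑ x, ∑ y, P x y = 1) :
    ContinuousOn (hFun P) (Set.Icc (PcX P) (PcXY P)) := by
  set A := PcX P
  set B := PcXY P
  intro x hx
  obtain ⟨hxA, hxB⟩ := hx
  rw [Metric.continuousWithinAt_iff]
  intro δ hδ
  -- right radius
  have hR : ∃ ηR > 0, ∀ y ∈ Set.Icc A B, x < y → y - x < ηR → |hFun P y - hFun P x| < δ := by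
    by_cases hxB' : x < B
    · obtain ⟨ε1, hε1gt, hε1le, hε1V⟩ := hFun_right_estimate P hpos hsum hxA hxB' (half_pos hδ)
      refine ⟨ε1 - x, by linarith, fun y hy hxy hylt => ?_⟩
      have hmono1 : hFun P x ≤ hFun P y := hFun_mono P hpos hsum hxA hxy.le
      have hmono2 : hFun P y ≤ hFun P ε1 :=
        hFun_mono P hpos hsum (le_trans hxA hxy.le) (by linarith)
      rw [abs_lt]
      constructor <;> linarith
    · refine ⟨1, by norm_num, fun y hy hxy _ => ?_⟩
      exact absurd (lt_of_lt_of_le hxy hy.2) (not_lt.mpr (not_lt.mp hxB'))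
  -- left radius
  have hL : ∃ ηL > 0, ∀ y ∈ Set.Icc A B, y ≤ x → x - y < ηL → |hFun P y - hFun P x| < δ := by
    by_cases hxA' : A < x
    · refine ⟨δ / 2 * (x - A), by nlinarith, fun y hy hyx hylt => ?_⟩
      have hmono : hFun P y ≤ hFun P x := hFun_mono P hpos hsum hy.1 hyx
      have hest : hFun P x - (x - y) / (x - A) ≤ hFun P y :=
        hFun_left_estimate P hpos hsum hxA' hy.1 hyx
      have hq : (x - y) / (x - A) < δ / 2 := by
        rw [div_lt_iff₀ (by linarith)]
        nlinarith
      rw [abs_lt]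
      constructor <;> linarith
    · refine ⟨1, by norm_num, fun y hy hyx _ => ?_⟩
      have : y = x := le_antisymm hyx (le_trans (not_lt.mp hxA') hy.1)
      simp [this, hδ]
  obtain ⟨ηR, hηR, hRest⟩ := hR
  obtain ⟨ηL, hηL, hLest⟩ := hL
  refine ⟨min ηL ηR, lt_min hηL hηR, fun y hy hdist => ?_⟩
  rw [Real.dist_eq] at hdist ⊢
  have habs : |y - x| < min ηL ηR := hdist
  rcases le_or_gt y x with hyx | hxy
  · have : x - y < ηL := by
      have := abs_lt.mp habs
      have := min_le_left ηL ηR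
      linarith [this]
    exact hLest y hy hyx this
  · have : y - x < ηR := by
      have := abs_lt.mp habs
      have := min_le_right ηL ηR
      linarith [this]
    exact hRest y hy hxy this

end Chunk7

section Endgame

open Classical in
/-- A continuous function on `[A,B]` that pointwise agrees with one of finitely many affine
functions is piecewise affine. -/
lemma exists_piecewise (A B : ℝ) (hAB : A ≤ B) (G : Finset (ℝ × ℝ)) (f : ℝ → ℝ)
    (hcont : ContinuousOn f (Set.Icc A B))
    (hsel : ∀ ε ∈ Set.Icc A B, ∃ p ∈ G, f ε = p.1 * ε + p.2) :
    ∃ (K : ℕ) (εs : Fin (K + 1) → ℝ), 1 ≤ K ∧ Monotone εs ∧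
      εs 0 = A ∧ εs (Fin.last K) = B ∧
      ∀ i : Fin K, ∃ a b : ℝ, ∀ ε ∈ Set.Icc (εs i.castSucc) (εs i.succ),
        f ε = a * ε + b := by
  rcases eq_or_lt_of_le hAB with hAB' | hAB'
  · -- degenerate case A = B
    subst hAB'
    obtain ⟨p, _, hp⟩ := hsel A ⟨le_refl A, le_refl A⟩
    refine ⟨1, fun _ => A, le_refl 1, monotone_const, rfl, rfl, fun i => ⟨p.1, p.2, ?_⟩⟩
    intro ε hε
    have : ε = A := le_antisymm hε.2 hε.1
    rw [this, ← hp]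
  -- main case A < B
  set cr : (ℝ × ℝ) × (ℝ × ℝ) → ℝ := fun pq =>
    if pq.1.1 = pq.2.1 then A else (pq.2.2 - pq.1.2) / (pq.1.1 - pq.2.1) with hcr
  set S : Finset ℝ := insert A (insert B
    (((G ×ˢ G).image cr).filter (fun x => A ≤ x ∧ x ≤ B))) with hSdef
  have hAS : A ∈ S := Finset.mem_insert_self _ _
  have hBS : B ∈ S := Finset.mem_insert_of_mem (Finset.mem_insert_self _ _)
  have hSsub : ∀ x ∈ S, A ≤ x ∧ x ≤ B := by
    intro x hx
    rw [hSdef] at hx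
    rcases Finset.mem_insert.mp hx with rfl | hx
    · exact ⟨le_refl _, hAB⟩
    rcases Finset.mem_insert.mp hx with rfl | hx
    · exact ⟨hAB, le_refl _⟩
    exact (Finset.mem_filter.mp hx).2
  have hbreak : ∀ p ∈ G, ∀ q ∈ G, ∀ x, A ≤ x → x ≤ B → p ≠ q →
      p.1 * x + p.2 = q.1 * x + q.2 → x ∈ S := by
    intro p hp q hq x hxA hxB hne heq
    by_cases hsl : p.1 = q.1
    · exfalso
      apply hne
      have : p.2 = q.2 := by rw [hsl] at heq; linarith
      exact Prod.ext hsl this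
    · have hx : x = (q.2 - p.2) / (p.1 - q.1) := by
        have h1 : p.1 - q.1 ≠ 0 := sub_ne_zero.mpr hsl
        field_simp
        nlinarith [heq]
      rw [hSdef]
      refine Finset.mem_insert_of_mem (Finset.mem_insert_of_mem (Finset.mem_filter.mpr
        ⟨Finset.mem_image.mpr ⟨(p, q), Finset.mem_product.mpr ⟨hp, hq⟩, ?_⟩, hxA, hxB⟩))
      rw [hcr]
      dsimp only
      rw [if_neg hsl, ← hx]
  have hcard2 : 1 < S.card := Finset.one_lt_card.mpr ⟨A, hAS, B, hBS, ne_of_lt hAB'⟩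
  set K := S.card - 1 with hK
  have hcardK : S.card = K + 1 := by omega
  have hK1 : 1 ≤ K := by omega
  set enum := S.orderIsoOfFin hcardK with henum
  set εs : Fin (K + 1) → ℝ := fun i => (enum i : ℝ) with hεs
  have hstrict : StrictMono εs := fun i j hij => enum.strictMono hij
  have hmono : Monotone εs := hstrict.monotone
  have hmem : ∀ i, εs i ∈ S := fun i => (enum i).2
  have hsurj : ∀ x ∈ S, ∃ j, εs j = x := by
    intro x hx
    exact ⟨enum.symm ⟨x, hx⟩, by rw [hεs]; simp⟩
  have hε0 : εs 0 = A := by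
    obtain ⟨j, hj⟩ := hsurj A hAS
    refine le_antisymm ?_ (hSsub _ (hmem 0)).1
    rw [← hj]
    exact hmono (Fin.zero_le j)
  have hεlast : εs (Fin.last K) = B := by
    obtain ⟨j, hj⟩ := hsurj B hBS
    refine le_antisymm (hSsub _ (hmem _)).2 ?_
    rw [← hj]
    exact hmono (Fin.le_last j)
  have hnogap : ∀ x ∈ S, ∀ i : Fin K, ¬(εs i.castSucc < x ∧ x < εs i.succ) := by
    rintro x hx i ⟨h1, h2⟩
    obtain ⟨j, hj⟩ := hsurj x hx
    rw [← hj] at h1 h2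
    have hlt1 : i.castSucc < j := by
      by_contra hc
      exact absurd (hmono (not_lt.mp hc)) (not_le.mpr h1)
    have : i.succ ≤ j := hlt1
    exact absurd (hmono this) (not_le.mpr h2)
  refine ⟨K, εs, hK1, hmono, hε0, hεlast, fun i => ?_⟩
  set p := εs i.castSucc with hp
  set q := εs i.succ with hq
  have hpq : p ≤ q := hmono (le_of_lt (Fin.castSucc_lt_succ : i.castSucc < i.succ))
  have hpIcc : A ≤ p ∧ p ≤ B := hSsub _ (hmem _)
  have hqIcc : A ≤ q ∧ q ≤ B := hSsub _ (hmem _)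
  rcases eq_or_lt_of_le hpq with hpq' | hpq'
  · -- degenerate piece
    obtain ⟨g, _, hg⟩ := hsel p ⟨hpIcc.1, hpIcc.2⟩
    refine ⟨g.1, g.2, fun ε hε => ?_⟩
    have : ε = p := le_antisymm (hpq' ▸ hε.2) hε.1
    rw [this, ← hg]
  -- nondegenerate piece
  set I := Set.Ioo p q with hI
  have hIsub : I ⊆ Set.Icc A B := fun x hx =>
    ⟨le_trans hpIcc.1 hx.1.le, le_trans hx.2.le hqIcc.2⟩
  have hopen : ∀ g : ℝ × ℝ, IsOpen {x | x ∈ I ∧ f x ≠ g.1 * x + g.2} := by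
    intro g
    rw [isOpen_iff_mem_nhds]
    rintro x ⟨hxI, hxne⟩
    have hIopen : IsOpen I := isOpen_Ioo
    have hfa : ContinuousAt f x :=
      (hcont.mono hIsub).continuousAt (hIopen.mem_nhds hxI)
    have hga : ContinuousAt (fun y => g.1 * y + g.2) x := by fun_prop
    have h1 : ∀ᶠ y in nhds x, f y ≠ g.1 * y + g.2 := by
      have : ContinuousAt (fun y => f y - (g.1 * y + g.2)) x := hfa.sub hga
      have hne : f x - (g.1 * x + g.2) ≠ 0 := sub_ne_zero.mpr hxne
      filter_upwards [this.eventually_ne hne] with y hy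
      exact sub_ne_zero.mp hy
    have h2 : ∀ᶠ y in nhds x, y ∈ I := hIopen.mem_nhds hxI
    filter_upwards [h1, h2] with y h1 h2
    exact ⟨h2, h1⟩
  have hdisj : ∀ x ∈ I, ∀ g ∈ G, ∀ g' ∈ G, g ≠ g' →
      f x = g.1 * x + g.2 → f x ≠ g'.1 * x + g'.2 := by
    intro x hx g hg g' hg' hne heq heq'
    have : g.1 * x + g.2 = g'.1 * x + g'.2 := by rw [← heq, ← heq']
    have hxS : x ∈ S := hbreak g hg g' hg' x (hIsub hx).1 (hIsub hx).2 hne this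
    exact hnogap x hxS i ⟨hx.1, hx.2⟩
  -- pick the line at the midpoint
  have hx0I : (p + q) / 2 ∈ I := ⟨by linarith, by linarith⟩
  obtain ⟨g0, hg0G, hg0⟩ := hsel ((p + q) / 2) (hIsub hx0I)
  have hone : ∀ x ∈ I, f x = g0.1 * x + g0.2 := by
    set U := {x | x ∈ I ∧ f x ≠ g0.1 * x + g0.2} with hU
    set V := I ∩ ⋂ g ∈ G.erase g0, {x | x ∈ I ∧ f x ≠ g.1 * x + g.2} with hV
    have hUopen : IsOpen U := hopen g0
    have hVopen : IsOpen V :=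
      isOpen_Ioo.inter (isOpen_biInter_finset fun g _ => hopen g)
    have hUI : U ⊆ I := fun x hx => hx.1
    have hVI : V ⊆ I := fun x hx => hx.1
    have hcover : I ⊆ U ∪ V := by
      intro x hx
      by_cases hfx : f x = g0.1 * x + g0.2
      · refine Or.inr ⟨hx, Set.mem_iInter₂.mpr fun g hg => ⟨hx, ?_⟩⟩
        exact hdisj x hx g0 hg0G g (Finset.mem_of_mem_erase hg)
          (Ne.symm (Finset.ne_of_mem_erase hg)) hfx
      · exact Or.inl ⟨hx, hfx⟩
    have hdUV : Disjoint U V := by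
      rw [Set.disjoint_left]
      rintro x ⟨hxI, hxne⟩ hxV
      obtain ⟨g1, hg1G, hg1⟩ := hsel x (hIsub hxI)
      by_cases hgg : g1 = g0
      · exact hxne (hgg ▸ hg1)
      · have := Set.mem_iInter₂.mp hxV.2 g1 (Finset.mem_erase.mpr ⟨hgg, hg1G⟩)
        exact this.2 hg1
    rcases IsPreconnected.subset_or_subset hUopen hVopen hdUV hcover isPreconnected_Ioo with
      hsub | hsub
    · exact absurd hg0 (hsub hx0I).2
    · intro x hx
      obtain ⟨g1, hg1G, hg1⟩ := hsel x (hIsub hx)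
      by_cases hgg : g1 = g0
      · exact hgg ▸ hg1
      · exact absurd hg1 ((Set.mem_iInter₂.mp (hsub hx).2 g1
          (Finset.mem_erase.mpr ⟨hgg, hg1G⟩)).2)
  have hext : ∀ x, x = p ∨ x = q → f x = g0.1 * x + g0.2 := by
    intro x hx
    have hxIcc : x ∈ Set.Icc A B := by
      rcases hx with rfl | rfl
      exacts [⟨hpIcc.1, hpIcc.2⟩, ⟨hqIcc.1, hqIcc.2⟩]
    have hclos : x ∈ closure I := by
      rw [hI, closure_Ioo (ne_of_lt hpq')]
      rcases hx with rfl | rfl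
      exacts [⟨le_refl _, hpq⟩, ⟨hpq, le_refl _⟩]
    have hnb : (nhdsWithin x I).NeBot := mem_closure_iff_nhdsWithin_neBot.mp hclos
    have h1 : Filter.Tendsto f (nhdsWithin x I) (nhds (f x)) :=
      ((hcont x hxIcc).mono hIsub).tendsto
    have h2 : Filter.Tendsto (fun y => g0.1 * y + g0.2) (nhdsWithin x I)
        (nhds (g0.1 * x + g0.2)) :=
      (((continuous_const.mul continuous_id).add
        continuous_const).continuousAt).continuousWithinAt.tendsto
    have h3 : Filter.Tendsto f (nhdsWithin x I) (nhds (g0.1 * x + g0.2)) :=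
      h2.congr' (Filter.eventuallyEq_of_mem self_mem_nhdsWithin
        fun y hy => (hone y hy).symm)
    exact (tendsto_nhds_unique h1 h3)
  refine ⟨g0.1, g0.2, fun ε hε => ?_⟩
  rcases eq_or_lt_of_le hε.1 with h1 | h1
  · exact hext ε (Or.inl h1.symm)
  rcases eq_or_lt_of_le hε.2 with h2 | h2
  · exact hext ε (Or.inr h2)
  exact hone ε ⟨h1, h2⟩

end Endgame

/-- Theorem 1: `h` is piecewise linear on `[P_c(X), P_c(X|Y)]`. -/
theorem hFun_piecewise_linear {M N : ℕ} (P : Fin (M + 1) → Fin (N + 1) → ℝ)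
    (hpos : ∀ x y, 0 ≤ P x y) (hsum : ∑ x, ∑ y, P x y = 1) :
    ∃ (K : ℕ) (εs : Fin (K + 1) → ℝ), 1 ≤ K ∧ Monotone εs ∧
      εs 0 = PcX P ∧ εs (Fin.last K) = PcXY P ∧
      ∀ i : Fin K, ∃ a b : ℝ,
        ∀ ε ∈ Set.Icc (εs i.castSucc) (εs i.succ), hFun P ε = a * ε + b :=
  exists_piecewise (PcX P) (PcXY P) (PcX_le_PcXY P hpos) (cands P) (hFun P)
    (hFun_continuousOn P hpos hsum) (fun ε hε => hFun_selection P hpos hsum hε.1)
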